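/- Let G = (S,E) be a path-complete labeled graph with length-1 labels, and let S_O be the collection of all subsets of S of the form T_{σ_k}(···T_{σ_1}(S)···) for finite (possibly empty) words σ_1···σ_k over {1,…,M} (all of which are nonempty by path-completeness). Then there exists exactly one nonempty subcollection C ⊆ S_O such that (i) C is complete: for every P ∈ C and every σ ∈ {1,…,M}, T_σ(P) ∈ C, and (ii) C is strongly connected: for any P, Q ∈ C there is a finite word σ_1···σ_k with T_{σ_k}(···T_{σ_1}(P)···) = Q. -/

import Mathlib

/-- A directed path in a labeled graph `(S, E)` from a node to a node, carrying
the word read along the path as its label. -/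
inductive HasPath {S L : Type*} (E : Set (S × S × L)) : S → S → List L → Prop
  | nil (s : S) : HasPath E s s []
  | cons {s t d : S} {σ : L} {w : List L} :
      (s, t, σ) ∈ E → HasPath E t d w → HasPath E s d (σ :: w)

/-- A labeled graph is path-complete if every finite word is contained (as a
contiguous subword) in the label of some directed path of the graph. -/
def PathComplete {S L : Type*} (E : Set (S × S × L)) : Prop :=
  ∀ w : List L, ∃ (s d : S) (w₁ w₂ : List L), HasPath E s d (w₁ ++ w ++ w₂)

/-- The observer successor set `T_σ(P) = {q | ∃ p ∈ P, (p, q, σ) ∈ E}`. -/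
def Tset {S L : Type*} (E : Set (S × S × L)) (σ : L) (P : Set S) : Set S :=
  {q | ∃ p ∈ P, (p, q, σ) ∈ E}

lemma Tset_mono {S L : Type*} (E : Set (S × S × L)) (σ : L) {P Q : Set S}
    (h : P ⊆ Q) : Tset E σ P ⊆ Tset E σ Q := by
  rintro q ⟨p, hp, hpq⟩
  exact ⟨p, h hp, hpq⟩

lemma foldl_Tset_mono {S L : Type*} (E : Set (S × S × L)) :
    ∀ (w : List L) {P Q : Set S}, P ⊆ Q →
      w.foldl (fun R σ => Tset E σ R) P ⊆ w.foldl (fun R σ => Tset E σ R) Q := by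
  intro w
  induction w with
  | nil => intro P Q h; exact h
  | cons a w ih => intro P Q h; exact ih (Tset_mono E a h)

lemma foldl_Tset_mem {S L : Type*} (E : Set (S × S × L)) {C : Set (Set S)}
    (hC : ∀ P ∈ C, ∀ σ : L, Tset E σ P ∈ C) :
    ∀ (w : List L) {P : Set S}, P ∈ C → w.foldl (fun R σ => Tset E σ R) P ∈ C := by
  intro w
  induction w with
  | nil => intro P h; exact h
  | cons a w ih => intro P h; exact ih (hC P h a)

/-- Lemma 3.1 of the paper. The observer graph of a
path-complete graph (whose node set `S_O` consists of all sets
`T_{σ_k}(⋯T_{σ_1}(S)⋯)` for finite words `σ_1⋯σ_k`) contains a *unique* nonempty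
subcollection of nodes `C` that is complete (closed under every observer
successor map `T_σ`) and strongly connected (any node of `C` can be mapped to
any other by iterating the observer successor maps along some finite word). -/
theorem stmt_5 {M : ℕ} (hM : 1 ≤ M) {S : Type*} [Fintype S] [Nonempty S]
    (E : Set (S × S × Fin M)) (hpc : PathComplete E) :
    ∃! C : Set (Set S),
      C.Nonempty ∧
      C ⊆ {P | ∃ w : List (Fin M),
              P = w.foldl (fun R σ => Tset E σ R) Set.univ} ∧
      (∀ P ∈ C, ∀ σ : Fin M, Tset E σ P ∈ C) ∧
      (∀ P ∈ C, ∀ Q ∈ C,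
        ∃ w : List (Fin M), w.foldl (fun R σ => Tset E σ R) P = Q) := by
  classical
  set f : Set S → Fin M → Set S := fun R σ => Tset E σ R with hf
  set 𝒮 : Set (Set S) := {P | ∃ w : List (Fin M), P = w.foldl f Set.univ} with h𝒮
  -- choose a ⊆-minimal element K of 𝒮
  have hfin : 𝒮.Finite := Set.toFinite _
  have hne : 𝒮.Nonempty := ⟨Set.univ, [], rfl⟩
  obtain ⟨K, hK𝒮, hKmin⟩ : ∃ K ∈ 𝒮, ∀ a' ∈ 𝒮, id a' ≤ id K → id K = id a' := by
    obtain ⟨K, hK⟩ := (Set.Finite.isPWO hfin).exists_minimal hne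
    exact ⟨K, hK.prop, fun a' ha' hle => (hK.eq_of_le ha' hle).symm⟩
  obtain ⟨m, hm⟩ := hK𝒮
  -- key fact: appending m to any word lands back at K
  have key : ∀ w : List (Fin M), (w ++ m).foldl f Set.univ = K := by
    intro w
    have hsub : (w ++ m).foldl f Set.univ ⊆ K := by
      rw [List.foldl_append, hm]
      exact foldl_Tset_mono E m (Set.subset_univ _)
    have hmem : (w ++ m).foldl f Set.univ ∈ 𝒮 := ⟨w ++ m, rfl⟩
    exact (hKmin _ hmem hsub).symm
  have hKeq : m.foldl f Set.univ = K := by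
    have := key []; simpa using this
  set C : Set (Set S) := {P | ∃ w : List (Fin M), P = w.foldl f K} with hC
  have hCalt : ∀ w : List (Fin M), w.foldl f K = (m ++ w).foldl f Set.univ := by
    intro w; rw [List.foldl_append, hKeq]
  refine ⟨C, ⟨⟨K, [], rfl⟩, ?_, ?_, ?_⟩, ?_⟩
  · -- C ⊆ 𝒮
    rintro P ⟨w, rfl⟩
    exact ⟨m ++ w, hCalt w⟩
  · -- complete
    rintro P ⟨w, rfl⟩ σ
    refine ⟨w ++ [σ], ?_⟩
    rw [List.foldl_append]
    rfl
  · -- strongly connected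
    rintro P ⟨u, rfl⟩ Q ⟨v, rfl⟩
    refine ⟨m ++ v, ?_⟩
    rw [List.foldl_append]
    congr 1
    calc m.foldl f (u.foldl f K)
        = ((m ++ u) ++ m).foldl f Set.univ := by
          rw [List.foldl_append, List.foldl_append, hKeq]
      _ = K := key (m ++ u)
  · -- uniqueness
    rintro C' ⟨⟨P, hP⟩, hsub, hcomp, hconn⟩
    obtain ⟨w, rfl⟩ := hsub hP
    have hKC' : K ∈ C' := by
      have := foldl_Tset_mem E hcomp m hP
      rw [← List.foldl_append, key w] at this
      exact this
    ext Q
    constructor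
    · intro hQ
      obtain ⟨v, hv⟩ := hconn K hKC' Q hQ
      exact ⟨v, hv.symm⟩
    · rintro ⟨v, rfl⟩
      exact foldl_Tset_mem E hcomp v hKC'
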